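/- The planar system ẋ = x(1-y+cx), ẏ = y(-1+x) with c > 0 admits no formal power series first integral: if f ∈ ℂ[[x,y]] satisfies x(1-y+cx)∂f/∂x + y(-1+x)∂f/∂y = 0, then f is a constant. -/

import Mathlib

open MvPowerSeries

/-- Formal partial derivative of a multivariate formal power series. -/
noncomputable def formalPderiv (i : Fin 2) (f : MvPowerSeries (Fin 2) ℂ) :
    MvPowerSeries (Fin 2) ℂ :=
  fun n => ((n i : ℂ) + 1) * f (n + Finsupp.single i 1)

namespace Stmt13Aux

/-- The exponent `x^m y^n` as a finitely supported function on `Fin 2`. -/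
noncomputable def E (m n : ℕ) : Fin 2 →₀ ℕ := Finsupp.single 0 m + Finsupp.single 1 n

lemma E_apply0 (m n : ℕ) : E m n 0 = m := by simp [E]

lemma E_apply1 (m n : ℕ) : E m n 1 = n := by simp [E, Finsupp.single_apply]

lemma E_add (a b p q : ℕ) : E a b + E p q = E (a + p) (b + q) := by
  simp only [E, Finsupp.single_add]
  abel

lemma E_succ0 (m n : ℕ) : E m n + Finsupp.single 0 1 = E (m + 1) n := by
  simp only [E, Finsupp.single_add]
  abel

lemma E_succ1 (m n : ℕ) : E m n + Finsupp.single 1 1 = E m (n + 1) := by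
  simp only [E, Finsupp.single_add]
  abel

lemma E_le {p q M N : ℕ} : E p q ≤ E M N ↔ p ≤ M ∧ q ≤ N := by
  rw [Finsupp.le_def]
  constructor
  · intro h
    exact ⟨by simpa [E_apply0] using h 0, by simpa [E_apply1] using h 1⟩
  · rintro ⟨h1, h2⟩ s
    fin_cases s
    · simpa [E_apply0] using h1
    · simpa [E_apply1] using h2

lemma E_zero : E 0 0 = 0 := by simp [E]

lemma eq_E (e : Fin 2 →₀ ℕ) : e = E (e 0) (e 1) := by
  ext s
  fin_cases s
  · simp [E_apply0]
  · simp [E_apply1]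

/-- coefficient of a monomial times `∂f/∂x`. -/
lemma coeff_mono_pd0 (f : MvPowerSeries (Fin 2) ℂ) (p q M N m n : ℕ) (r : ℂ)
    (hM : M = p + m) (hN : N = q + n) :
    coeff (E M N) (monomial (E p q) r * formalPderiv 0 f)
      = r * (((m : ℂ) + 1) * f (E (m + 1) n)) := by
  subst hM hN
  rw [← E_add, coeff_add_monomial_mul]
  congr 1
  show ((E m n 0 : ℂ) + 1) * f (E m n + Finsupp.single 0 1) = _
  rw [E_apply0, E_succ0]

/-- coefficient of a monomial times `∂f/∂y`. -/
lemma coeff_mono_pd1 (f : MvPowerSeries (Fin 2) ℂ) (p q M N m n : ℕ) (r : ℂ)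
    (hM : M = p + m) (hN : N = q + n) :
    coeff (E M N) (monomial (E p q) r * formalPderiv 1 f)
      = r * (((n : ℂ) + 1) * f (E m (n + 1))) := by
  subst hM hN
  rw [← E_add, coeff_add_monomial_mul]
  congr 1
  show ((E m n 1 : ℂ) + 1) * f (E m n + Finsupp.single 1 1) = _
  rw [E_apply1, E_succ1]

lemma coeff_mono_vanish (p q M N : ℕ) (r : ℂ) (g : MvPowerSeries (Fin 2) ℂ)
    (h : ¬ (p ≤ M ∧ q ≤ N)) :
    coeff (E M N) (monomial (E p q) r * g) = 0 := by
  rw [coeff_monomial_mul, if_neg]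
  rw [E_le]
  exact h

/-- The purely combinatorial induction on the coefficients. -/
lemma main_alg (c : ℂ) (hc : c ≠ 0) (a : ℕ → ℕ → ℂ)
    (key0 : ∀ n : ℕ, ((n : ℂ) + 1) * a 0 (n + 1) = 0)
    (keyN0 : ∀ m : ℕ, ((m : ℂ) + 1) * a (m + 1) 0 + c * (m : ℂ) * a m 0 = 0)
    (key' : ∀ m n : ℕ, ((m : ℂ) + 1 - ((n : ℂ) + 1)) * a (m + 1) (n + 1)
      = ((m : ℂ) + 1) * a (m + 1) n - (c * (m : ℂ) + (n : ℂ) + 1) * a m (n + 1)) :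
    ∀ m n : ℕ, m + n ≠ 0 → a m n = 0 := by
  have main : ∀ L : ℕ, ∀ m n : ℕ, m + n ≤ L → m + n ≠ 0 → a m n = 0 := by
    intro L
    induction L with
    | zero => intro m n h1 h2; omega
    | succ L ih =>
      have offd : ∀ m n : ℕ, m + n = L + 1 → m ≠ n → a m n = 0 := by
        intro m n hs hmn
        rcases m with _ | m
        · rcases n with _ | n
          · omega
          · exact (mul_eq_zero.mp (key0 n)).resolve_left (Nat.cast_add_one_ne_zero n)
        · rcases n with _ | n
          · rcases m with _ | m
            · have h := keyN0 0
              simpa using h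
            · have h := keyN0 (m + 1)
              have hm : a (m + 1) 0 = 0 := ih (m + 1) 0 (by omega) (by omega)
              rw [hm] at h
              have hcast : (((m + 1 : ℕ) : ℂ) + 1) ≠ 0 := by
                exact_mod_cast Nat.succ_ne_zero (m + 1)
              have h2 : (((m + 1 : ℕ) : ℂ) + 1) * a (m + 1 + 1) 0 = 0 := by
                linear_combination h
              exact (mul_eq_zero.mp h2).resolve_left hcast
          · have h := key' m n
            have h1 : a (m + 1) n = 0 := ih (m + 1) n (by omega) (by omega)
            have h2 : a m (n + 1) = 0 := ih m (n + 1) (by omega) (by omega)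
            have hne2 : ((m : ℂ) + 1 - ((n : ℂ) + 1)) ≠ 0 := by
              refine sub_ne_zero.mpr fun hh => (show m ≠ n by omega) ?_
              exact_mod_cast add_right_cancel hh
            have h0 : ((m : ℂ) + 1 - ((n : ℂ) + 1)) * a (m + 1) (n + 1) = 0 := by
              rw [h, h1, h2]; ring
            exact (mul_eq_zero.mp h0).resolve_left hne2
      intro m n hle hne
      by_cases hcase : m + n ≤ L
      · exact ih m n hcase hne
      have hs : m + n = L + 1 := by omega
      by_cases hmn : m = n
      swap
      · exact offd m n hs hmn
      subst hmn
      obtain ⟨j, rfl⟩ : ∃ j, m = j + 1 := ⟨m - 1, by omega⟩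
      have e1 : a (j + 1 + 1) j = 0 := offd (j + 1 + 1) j (by omega) (by omega)
      have e2 : a j (j + 1 + 1) = 0 := offd j (j + 1 + 1) (by omega) (by omega)
      have h1 := key' (j + 1) j
      have h2 := key' j (j + 1)
      have h3 := key' (j + 1) (j + 1)
      push_cast at h1 h2 h3
      have hkey : c * ((j : ℂ) + 1) * a (j + 1) (j + 1) = 0 := by
        linear_combination ((j : ℂ) + 2) * h1 + (c * ((j : ℂ) + 1) + (j : ℂ) + 2) * h2 + h3
          + ((j : ℂ) + 2) ^ 2 * e1
          - (c * ((j : ℂ) + 1) + (j : ℂ) + 2) * (c * (j : ℂ) + (j : ℂ) + 2) * e2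
      exact (mul_eq_zero.mp hkey).resolve_left
        (mul_ne_zero hc (Nat.cast_add_one_ne_zero j))
  intro m n hmn
  exact main (m + n) m n le_rfl hmn

end Stmt13Aux

open Stmt13Aux in
/-- The planar system ẋ = x(1-y+cx), ẏ = y(-1+x) with c > 0 admits no (non-constant)
formal power series first integral. -/
theorem stmt_13 (c : ℝ) (hc : 0 < c) (f : MvPowerSeries (Fin 2) ℂ)
    (heq : X 0 * (1 - X 1 + C (σ := Fin 2) (R := ℂ) (c : ℂ) * X 0) * formalPderiv 0 f
      + X 1 * (-1 + X 0) * formalPderiv 1 f = 0) :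
    ∃ d : ℂ, f = C (σ := Fin 2) (R := ℂ) d := by
  classical
  -- Rewrite the equation as a sum of monomial multiples of the derivatives.
  have m1 : monomial (E 1 0) (1 : ℂ) = X 0 := by
    rw [X_def]
    congr 1
    simp [E]
  have m4 : monomial (E 0 1) (-1 : ℂ) = -X 1 := by
    rw [X_def, ← map_neg]
    congr 1
    simp [E]
  have m5 : monomial (E 1 1) (1 : ℂ) = X 0 * X 1 := by
    rw [X_def, X_def, monomial_mul_monomial, one_mul]
    rfl
  have m2 : monomial (E 1 1) (-1 : ℂ) = -(X 0 * X 1) := by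
    rw [← m5, ← map_neg]
  have m3 : monomial (E 2 0) ((c : ℝ) : ℂ) = C (σ := Fin 2) (R := ℂ) (c : ℂ) * (X 0 * X 0) := by
    rw [X_def, monomial_mul_monomial, one_mul,
      show (C (σ := Fin 2) (R := ℂ) ((c : ℝ) : ℂ)) = monomial 0 ((c : ℝ) : ℂ) from rfl,
      monomial_mul_monomial, zero_add]
    congr 1
    · simp [E, ← Finsupp.single_add]
    · ring
  have heq' : monomial (E 1 0) (1 : ℂ) * formalPderiv 0 f
      + monomial (E 1 1) (-1 : ℂ) * formalPderiv 0 f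
      + monomial (E 2 0) ((c : ℝ) : ℂ) * formalPderiv 0 f
      + monomial (E 0 1) (-1 : ℂ) * formalPderiv 1 f
      + monomial (E 1 1) (1 : ℂ) * formalPderiv 1 f = 0 := by
    rw [m1, m2, m3, m4, m5]
    linear_combination heq
  have hev : ∀ M N : ℕ,
      coeff (E M N) (monomial (E 1 0) (1 : ℂ) * formalPderiv 0 f)
      + coeff (E M N) (monomial (E 1 1) (-1 : ℂ) * formalPderiv 0 f)
      + coeff (E M N) (monomial (E 2 0) ((c : ℝ) : ℂ) * formalPderiv 0 f)
      + coeff (E M N) (monomial (E 0 1) (-1 : ℂ) * formalPderiv 1 f)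
      + coeff (E M N) (monomial (E 1 1) (1 : ℂ) * formalPderiv 1 f) = 0 := by
    intro M N
    have := congrArg (coeff (E M N)) heq'
    simpa only [map_add, map_zero] using this
  -- the three coefficient recurrences
  have key0 : ∀ n : ℕ, ((n : ℂ) + 1) * f (E 0 (n + 1)) = 0 := by
    intro n
    have h := hev 0 (n + 1)
    rw [coeff_mono_vanish 1 0 0 (n + 1) _ _ (by omega),
      coeff_mono_vanish 1 1 0 (n + 1) _ _ (by omega),
      coeff_mono_vanish 2 0 0 (n + 1) _ _ (by omega),
      coeff_mono_vanish 1 1 0 (n + 1) _ _ (by omega),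
      coeff_mono_pd1 f 0 1 0 (n + 1) 0 n (-1) (by omega) (by omega)] at h
    linear_combination -h
  have keyN0 : ∀ m : ℕ, ((m : ℂ) + 1) * f (E (m + 1) 0) + (c : ℂ) * (m : ℂ) * f (E m 0) = 0 := by
    intro m
    have h := hev (m + 1) 0
    rw [coeff_mono_pd0 f 1 0 (m + 1) 0 m 0 1 (by omega) (by omega),
      coeff_mono_vanish 1 1 (m + 1) 0 _ _ (by omega),
      coeff_mono_vanish 0 1 (m + 1) 0 _ _ (by omega),
      coeff_mono_vanish 1 1 (m + 1) 0 _ _ (by omega)] at h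
    rcases m with _ | k
    · rw [coeff_mono_vanish 2 0 (0 + 1) 0 _ _ (by omega)] at h
      push_cast
      linear_combination h
    · rw [coeff_mono_pd0 f 2 0 (k + 1 + 1) 0 k 0 ((c : ℝ) : ℂ) (by omega) (by omega)] at h
      push_cast
      push_cast at h
      linear_combination h
  have key' : ∀ m n : ℕ, ((m : ℂ) + 1 - ((n : ℂ) + 1)) * f (E (m + 1) (n + 1))
      = ((m : ℂ) + 1) * f (E (m + 1) n) - ((c : ℂ) * (m : ℂ) + (n : ℂ) + 1) * f (E m (n + 1)) := by
    intro m n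
    have h := hev (m + 1) (n + 1)
    rw [coeff_mono_pd0 f 1 0 (m + 1) (n + 1) m (n + 1) 1 (by omega) (by omega),
      coeff_mono_pd0 f 1 1 (m + 1) (n + 1) m n (-1) (by omega) (by omega),
      coeff_mono_pd1 f 0 1 (m + 1) (n + 1) (m + 1) n (-1) (by omega) (by omega),
      coeff_mono_pd1 f 1 1 (m + 1) (n + 1) m n 1 (by omega) (by omega)] at h
    rcases m with _ | k
    · rw [coeff_mono_vanish 2 0 (0 + 1) (n + 1) _ _ (by omega)] at h
      push_cast
      linear_combination h
    · rw [coeff_mono_pd0 f 2 0 (k + 1 + 1) (n + 1) k (n + 1) ((c : ℝ) : ℂ) (by omega)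
        (by omega)] at h
      push_cast
      push_cast at h
      linear_combination h
  have hcC : ((c : ℝ) : ℂ) ≠ 0 := by
    exact_mod_cast hc.ne'
  have hvan := main_alg ((c : ℝ) : ℂ) hcC (fun m n => f (E m n)) key0 keyN0 key'
  refine ⟨coeff 0 f, ?_⟩
  apply MvPowerSeries.ext
  intro e
  rw [coeff_C]
  split_ifs with he
  · rw [he]
  · have hne : e 0 + e 1 ≠ 0 := by
      intro h0
      apply he
      rw [eq_E e, Nat.eq_zero_of_add_eq_zero_right h0, Nat.eq_zero_of_add_eq_zero_left h0,
        E_zero]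
    have := hvan (e 0) (e 1) hne
    calc coeff e f = f (E (e 0) (e 1)) := by rw [← eq_E e]; rfl
      _ = 0 := this
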